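/- Let A be a quadratic form on a dense domain D × D in a Hilbert space H. Then A extends to a closed operator A⁻ with D ⊆ dom A⁻ ∩ dom (A⁻)*, D a core for A⁻, if and only if the matrix element ⟨ψ, Aχ⟩ extends continuously (linearly) in χ ∈ H for each fixed ψ ∈ D, and continuously (antilinearly) in ψ ∈ H for each fixed χ ∈ D. -/

import Mathlib

open InnerProductSpace LinearPMap Complex

local notation "⟪" x ", " y "⟫" => @inner ℂ _ _ x y

/-- Closability criterion for quadratic forms.  Let `A` be a sesquilinear form
(conjugate-linear in the first slot) on a dense subspace `D` of a complex
Hilbert space `H`.  Then `A` extends to a closed operator `A⁻` with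
`D ⊆ dom A⁻ ∩ dom (A⁻)*` and `D` a core for `A⁻`, if and only if the matrix
element `⟨ψ, Aχ⟩` is bounded (hence extends continuously) in `χ` for each
fixed `ψ ∈ D`, and bounded in `ψ` for each fixed `χ ∈ D`. -/
theorem quadratic_form_closable_iff (H : Type*) [NormedAddCommGroup H]
    [InnerProductSpace ℂ H] [CompleteSpace H]
    (D : Submodule ℂ H) (hD : Dense (D : Set H))
    (A : D →ₗ⋆[ℂ] (D →ₗ[ℂ] ℂ)) :
    (∃ T : H →ₗ.[ℂ] H, ∃ hdom : D ≤ T.domain,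
        T.IsClosed ∧ D ≤ T.adjoint.domain ∧ (T.domRestrict D).closure = T ∧
        ∀ ψ χ : D, A ψ χ = (inner ℂ (ψ : H) (T ⟨(χ : H), hdom χ.2⟩) : ℂ))
      ↔ ((∀ ψ : D, ∃ C : ℝ, ∀ χ : D, ‖A ψ χ‖ ≤ C * ‖(χ : H)‖) ∧
         (∀ χ : D, ∃ C : ℝ, ∀ ψ : D, ‖A ψ χ‖ ≤ C * ‖(ψ : H)‖)) := by
  constructor
  · rintro ⟨T, hdom, hclosed, hadj, hcore, hrep⟩
    have hT : Dense (T.domain : Set H) := hD.mono hdom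
    constructor
    · intro ψ
      refine ⟨‖T.adjoint ⟨(ψ : H), hadj ψ.2⟩‖, fun χ => ?_⟩
      have hfa := (adjoint_isFormalAdjoint hT) ⟨(ψ : H), hadj ψ.2⟩ ⟨(χ : H), hdom χ.2⟩
      rw [hrep ψ χ, ← hfa]
      exact norm_inner_le_norm _ _
    · intro χ
      refine ⟨‖T ⟨(χ : H), hdom χ.2⟩‖, fun ψ => ?_⟩
      rw [hrep ψ χ, mul_comm]
      exact norm_inner_le_norm _ _
  · rintro ⟨h1, h2⟩
    -- Every bounded linear functional on `D` is represented by a vector of `H`.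
    have ext : ∀ (f : D →ₗ[ℂ] ℂ) (C : ℝ), (∀ x : D, ‖f x‖ ≤ C * ‖(x : H)‖) →
        ∃ w : H, ∀ x : D, ⟪w, (x : H)⟫ = f x := by
      intro f C hf
      let fc : D →L[ℂ] ℂ := f.mkContinuous C hf
      let Fc : H →L[ℂ] ℂ := fc.extend (Submodule.subtypeL D)
      refine ⟨(toDual ℂ H).symm Fc, fun x => ?_⟩
      rw [toDual_symm_apply]
      exact ContinuousLinearMap.extend_eq _ hD.denseRange_val isUniformEmbedding_subtype_val.isUniformInducing x
    -- the functional `ψ ↦ conj (A ψ χ)` is linear and bounded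
    have hS0 : ∀ χ : D, ∃ w : H, ∀ ψ : D, ⟪w, (ψ : H)⟫ = (starRingEnd ℂ) (A ψ χ) := by
      intro χ
      obtain ⟨C, hC⟩ := h2 χ
      exact ext
        { toFun := fun ψ => (starRingEnd ℂ) (A ψ χ)
          map_add' := fun ψ ψ' => by simp
          map_smul' := fun c ψ => by simp } C (fun ψ => by simpa using hC ψ)
    choose S hS using hS0
    have hS' : ∀ χ ψ : D, ⟪(ψ : H), S χ⟫ = A ψ χ := fun χ ψ => by
      rw [← inner_conj_symm, hS χ ψ, RingHomCompTriple.comp_apply, RingHom.id_apply]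
    -- the operator associated with the form
    let Smap : D →ₗ[ℂ] H :=
      { toFun := S
        map_add' := fun χ χ' => hD.eq_of_inner_right ℂ fun ψ' hψ => by
          obtain ⟨ψ, rfl⟩ : ∃ ψ : D, (ψ : H) = ψ' := ⟨⟨ψ', hψ⟩, rfl⟩
          rw [hS' _ ψ, inner_add_right, hS' _ ψ, hS' _ ψ, LinearMap.map_add]
        map_smul' := fun c χ => hD.eq_of_inner_right ℂ fun ψ' hψ => by
          obtain ⟨ψ, rfl⟩ : ∃ ψ : D, (ψ : H) = ψ' := ⟨⟨ψ', hψ⟩, rfl⟩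
          rw [hS' _ ψ, RingHom.id_apply, inner_smul_right, hS' _ ψ, LinearMap.map_smul, smul_eq_mul] }
    let A₀ : H →ₗ.[ℂ] H := ⟨D, Smap⟩
    -- key: for every `ψ ∈ D` there is `w` such that `⟪w, x⟫ = ⟪ψ, y⟫` for all
    -- `(x, y)` in the closure of the graph of `A₀`.
    have key : ∀ ψ : D, ∃ w : H, ∀ p : H × H, p ∈ A₀.graph.topologicalClosure →
        ⟪w, p.1⟫ = ⟪(ψ : H), p.2⟫ := by
      intro ψ
      obtain ⟨C, hC⟩ := h1 ψ
      obtain ⟨w, hw⟩ := ext (A ψ) C hC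
      refine ⟨w, fun p hp => ?_⟩
      have hcl : IsClosed {p : H × H | ⟪w, p.1⟫ = ⟪(ψ : H), p.2⟫} :=
        isClosed_eq (continuous_const.inner continuous_fst) (continuous_const.inner continuous_snd)
      have hsub : (A₀.graph : Set (H × H)) ⊆ {p : H × H | ⟪w, p.1⟫ = ⟪(ψ : H), p.2⟫} := by
        intro q hq
        rw [SetLike.mem_coe, LinearPMap.mem_graph_iff] at hq
        obtain ⟨χ, hx, hy⟩ := hq
        simp only [Set.mem_setOf_eq]
        rw [← hx, ← hy]
        have hAχ : A₀ χ = S χ := rfl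
        rw [hAχ, hS' χ ψ, hw χ]
      have hp' : p ∈ closure (A₀.graph : Set (H × H)) := by
        rwa [← Submodule.topologicalClosure_coe]
      exact closure_minimal hsub hcl hp'
    -- `A₀` is closable
    have hg : ∀ (x : H × H), x ∈ A₀.graph.topologicalClosure → x.fst = 0 → x.snd = 0 := by
      intro q hq hq0
      refine hD.eq_zero_of_inner_right ℂ fun ψ' hψ => ?_
      obtain ⟨ψ, rfl⟩ : ∃ ψ : D, (ψ : H) = ψ' := ⟨⟨ψ', hψ⟩, rfl⟩
      obtain ⟨w, hw⟩ := key ψ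
      have hwq := hw q hq
      rw [hq0, inner_zero_right] at hwq
      exact hwq.symm
    have hclosable : A₀.IsClosable :=
      ⟨A₀.graph.topologicalClosure.toLinearPMap,
        (Submodule.toLinearPMap_graph_eq _ hg).symm⟩
    refine ⟨A₀.closure, A₀.le_closure.1, hclosable.closure_isClosed, ?_, ?_, ?_⟩
    · -- D ≤ adjoint domain
      intro ψ hψ
      obtain ⟨w, hw⟩ := key ⟨ψ, hψ⟩
      refine mem_adjoint_domain_of_exists _ ⟨w, fun x => ?_⟩
      have hx : ((x : H), A₀.closure x) ∈ A₀.graph.topologicalClosure := by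
        rw [hclosable.graph_closure_eq_closure_graph]
        exact A₀.closure.mem_graph x
      exact hw _ hx
    · exact (A₀.closureHasCore).closure_eq
    · intro ψ χ
      have hχ : A₀.closure ⟨(χ : H), A₀.le_closure.1 χ.2⟩ = A₀ χ :=
        (A₀.le_closure.2 (by simp)).symm
      rw [hχ]
      exact (hS' χ ψ).symm
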